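/- Any word w over Fin q with property P — any two occurrences of the same letter are at distance at least q-1 and all length-q infixes of w are pairwise distinct — avoids Z_3. -/

import Mathlib

/-- Any word over `Fin q` in which equal letters are at distance at least
`q - 1` and all length-`q` infixes are pairwise distinct avoids `Z₃`. -/
theorem propertyP_avoids_Z3 (q : ℕ) (hq : 3 ≤ q) (w : List (Fin q))
    (hsep : ∀ (i j : ℕ) (hi : i < w.length) (hj : j < w.length), i < j →
      w.get ⟨i, hi⟩ = w.get ⟨j, hj⟩ → q - 1 ≤ j - i)
    (hdist : ∀ i j : ℕ, i ≠ j → i + q ≤ w.length → j + q ≤ w.length →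
      (w.drop i).take q ≠ (w.drop j).take q) :
    ¬ ∃ A B C : List (Fin q), A ≠ [] ∧ B ≠ [] ∧ C ≠ [] ∧
      (A ++ B ++ A ++ C ++ A ++ B ++ A) <:+: w := by
  rintro ⟨A, B, C, hA, hB, hC, u, v, hw⟩
  have ha : 0 < A.length := List.length_pos_iff.mpr hA
  have hc : 0 < C.length := List.length_pos_iff.mpr hC
  have hw' : u ++ ((A ++ B ++ A) ++ (C ++ ((A ++ B ++ A) ++ v))) = w := by
    rw [← hw]; simp [List.append_assoc]
  have hlen : w.length = u.length + ((A.length + B.length + A.length)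
      + (C.length + ((A.length + B.length + A.length) + v.length))) := by
    rw [← hw']; simp; omega
  have hdrop : w.drop u.length = (A ++ B ++ A) ++ (C ++ ((A ++ B ++ A) ++ v)) := by
    rw [← hw']; exact List.drop_left
  have hDlen : (A ++ B ++ A).length = A.length + B.length + A.length := by
    rw [List.length_append, List.length_append]
  by_cases hq' : q ≤ A.length + B.length + A.length
  · have h1 : u.length + q ≤ w.length := by omega
    have h2 : (u.length + (A.length + B.length + A.length + C.length)) + q
        ≤ w.length := by omega
    have hne : u.length ≠ u.length + (A.length + B.length + A.length + C.length) := by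
      omega
    apply hdist u.length _ hne h1 h2
    have hdrop2 : w.drop (u.length + (A.length + B.length + A.length + C.length))
        = (A ++ B ++ A) ++ v := by
      have h3 : (A ++ B ++ A) ++ (C ++ ((A ++ B ++ A) ++ v))
          = ((A ++ B ++ A) ++ C) ++ ((A ++ B ++ A) ++ v) := by
        simp [List.append_assoc]
      rw [← List.drop_drop, hdrop, h3]
      exact List.drop_left' (by simp; omega)
    rw [hdrop, hdrop2,
      List.take_append_of_le_length (l₁ := A ++ B ++ A)
        (l₂ := C ++ ((A ++ B ++ A) ++ v)) (by rw [hDlen]; exact hq'),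
      List.take_append_of_le_length (l₁ := A ++ B ++ A) (l₂ := v)
        (by rw [hDlen]; exact hq')]
  · push_neg at hq'
    have hi : u.length < w.length := by omega
    have hj : u.length + (A.length + B.length) < w.length := by omega
    have hlt : u.length < u.length + (A.length + B.length) := by omega
    have hLfull : ((A ++ B ++ A) ++ (C ++ ((A ++ B ++ A) ++ v))).length
        = w.length - u.length := by rw [← hdrop, List.length_drop]
    have hget : w.get ⟨u.length, hi⟩ = w.get ⟨u.length + (A.length + B.length), hj⟩ := by
      have e1 : w.get ⟨u.length, hi⟩
          = (w.drop u.length)[0]'(by rw [List.length_drop]; omega) := by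
        simp [List.get_eq_getElem, List.getElem_drop]
      have e2 : w.get ⟨u.length + (A.length + B.length), hj⟩
          = (w.drop u.length)[A.length + B.length]'(by rw [List.length_drop]; omega) := by
        simp [List.get_eq_getElem, List.getElem_drop]
      have hx0 : ((A ++ B ++ A) ++ (C ++ ((A ++ B ++ A) ++ v)))[0]'(by
            rw [hLfull]; omega) = A[0]'ha := by
        rw [List.getElem_append_left (by omega : 0 < (A ++ B ++ A).length),
          List.getElem_append_left (by simp; omega : 0 < (A ++ B).length),
          List.getElem_append_left ha]
      have hxab : ((A ++ B ++ A) ++ (C ++ ((A ++ B ++ A) ++ v)))[A.length + B.length]'(by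
            rw [hLfull]; omega) = A[0]'ha := by
        rw [List.getElem_append_left
            (by rw [hDlen]; omega : A.length + B.length < (A ++ B ++ A).length),
          List.getElem_append_right (by simp : (A ++ B).length ≤ A.length + B.length)]
        congr 1
        simp
      calc w.get ⟨u.length, hi⟩
          = (w.drop u.length)[0]'(by rw [List.length_drop]; omega) := e1
        _ = ((A ++ B ++ A) ++ (C ++ ((A ++ B ++ A) ++ v)))[0]'(by
              rw [hLfull]; omega) := List.getElem_of_eq hdrop _
        _ = A[0]'ha := hx0
        _ = ((A ++ B ++ A) ++ (C ++ ((A ++ B ++ A) ++ v)))[A.length + B.length]'(by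
              rw [hLfull]; omega) := hxab.symm
        _ = (w.drop u.length)[A.length + B.length]'(by rw [List.length_drop]; omega) :=
              (List.getElem_of_eq hdrop _).symm
        _ = w.get ⟨u.length + (A.length + B.length), hj⟩ := e2.symm
    have := hsep u.length (u.length + (A.length + B.length)) hi hj hlt hget
    omega
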